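/- arXiv:2102.03015 — 4 statements merged into one kernel-verified Lean document; each statement's English description precedes it below -/
import Mathlib

section
/- Let g, n, N, t, u be positive integers with N = g·n·u, g ≥ t+1, n ≥ t+1, u ≥ 1. For every integer k with 0 ≤ k ≤ t, ∑_{l=0}^{n} (-1)^l · [C(n,l) / (2^{n-1} · C(N, g·l))] · C(N - t, g·l - k) = 0. -/
open Finset Polynomial

/-- Binomial coefficient with an integer lower argument, equal to 0 for negative arguments. -/
def chooseZ (n : ℕ) (k : ℤ) : ℕ := if 0 ≤ k then n.choose k.toNat else 0

/-- Iterated forward difference of zero function is zero. -/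
lemma fwdDiff_iter_zero_fun (m : ℕ) :
    (fwdDiff (1 : ℕ))^[m] (fun _ : ℕ => (0 : ℚ)) = fun _ => 0 := by
  induction m with
  | zero => rfl
  | succ m ih =>
    rw [Function.iterate_succ_apply]
    have : fwdDiff (1 : ℕ) (fun _ : ℕ => (0 : ℚ)) = fun _ : ℕ => (0 : ℚ) := by
      funext x; simp [fwdDiff]
    rw [this, ih]

lemma comp_sub_natDegree_lt (p : ℚ[X]) (hp : 0 < p.natDegree) :
    (p.comp (X + C 1) - p).natDegree < p.natDegree := by
  have hpne : p ≠ 0 := fun h => by simp [h] at hp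
  have hdc : (p.comp (X + C 1)).natDegree = p.natDegree := by
    simpa [taylor_apply] using natDegree_taylor p 1
  have hcne : p.comp (X + C 1) ≠ 0 := by
    intro h; rw [h, natDegree_zero] at hdc; omega
  have hlc : (p.comp (X + C 1)).leadingCoeff = p.leadingCoeff := by
    rw [leadingCoeff_comp (by rw [natDegree_X_add_C]; exact one_ne_zero),
      Monic.leadingCoeff (monic_X_add_C (1 : ℚ)), one_pow, mul_one]
  have hdeg : (p.comp (X + C 1)).degree = p.degree := by
    rw [degree_eq_natDegree hcne, degree_eq_natDegree hpne, hdc]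
  have hd : (p.comp (X + C 1) - p).degree < p.degree := by
    have := degree_sub_lt hdeg hcne hlc
    rwa [hdeg] at this
  rcases eq_or_ne (p.comp (X + C 1) - p) 0 with h | h
  · rw [h, natDegree_zero]; exact hp
  · exact natDegree_lt_natDegree h hd

lemma fwdDiff_iter_poly (n : ℕ) (p : ℚ[X]) (hp : p.natDegree < n) :
    (fwdDiff (1 : ℕ))^[n] (fun x : ℕ => p.eval (x : ℚ)) = fun _ => 0 := by
  induction n generalizing p with
  | zero => exact absurd hp (Nat.not_lt_zero _)
  | succ n ih =>
    rw [Function.iterate_succ_apply]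
    have hΔ : fwdDiff (1 : ℕ) (fun x : ℕ => p.eval (x : ℚ))
        = fun x : ℕ => (p.comp (X + C 1) - p).eval (x : ℚ) := by
      funext x
      simp only [fwdDiff, eval_sub, eval_comp, eval_add, eval_X, eval_C]
      push_cast
      ring
    rw [hΔ]
    rcases Nat.eq_zero_or_pos p.natDegree with h0 | h0
    · obtain ⟨a, rfl⟩ := natDegree_eq_zero.mp h0
      have : (fun x : ℕ => ((C a).comp (X + C 1) - C a).eval (x : ℚ))
          = fun _ : ℕ => (0 : ℚ) := by
        funext x; simp
      rw [this]
      exact fwdDiff_iter_zero_fun n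
    · exact ih _ (lt_of_lt_of_le (comp_sub_natDegree_lt p h0) (by omega))

lemma alt_sum_poly (n : ℕ) (p : ℚ[X]) (hp : p.natDegree < n) :
    ∑ l ∈ range (n + 1), (-1 : ℚ) ^ l * (n.choose l : ℚ) * p.eval (l : ℚ) = 0 := by
  have h := fwdDiff_iter_eq_sum_shift (1 : ℕ) (fun x : ℕ => p.eval (x : ℚ)) n 0
  rw [fwdDiff_iter_poly n p hp] at h
  have h' : (0 : ℚ) = ∑ l ∈ range (n + 1),
      ((-1 : ℚ) ^ (n - l) * (n.choose l : ℚ)) * p.eval (l : ℚ) := by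
    simpa [zsmul_eq_mul] using h
  have : ∑ l ∈ range (n + 1), (-1 : ℚ) ^ l * (n.choose l : ℚ) * p.eval (l : ℚ)
      = (-1 : ℚ) ^ n * ∑ l ∈ range (n + 1),
        ((-1 : ℚ) ^ (n - l) * (n.choose l : ℚ)) * p.eval (l : ℚ) := by
    rw [Finset.mul_sum]
    refine Finset.sum_congr rfl fun l hl => ?_
    have hln : l ≤ n := Nat.lt_succ_iff.mp (Finset.mem_range.mp hl)
    have hpow : (-1 : ℚ) ^ n * (-1 : ℚ) ^ (n - l) = (-1 : ℚ) ^ l := by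
      rw [← pow_add]
      have : n + (n - l) = 2 * (n - l) + l := by omega
      rw [this, pow_add, pow_mul]
      simp
    rw [← hpow]; ring
  rw [this, ← h', mul_zero]

open Nat in
/-- The key term identity. -/
lemma term_eq (N t k m : ℕ) (htN : t ≤ N) (hkt : k ≤ t) (hmN : m ≤ N) :
    (chooseZ (N - t) ((m : ℤ) - (k : ℤ)) : ℚ) * ∏ i ∈ range t, ((N : ℚ) - i)
      = (N.choose m : ℚ) * ((∏ i ∈ range k, ((m : ℚ) - i)) *
          ∏ j ∈ range (t - k), ((N : ℚ) - m - j)) := by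
  rcases lt_or_ge m k with hmk | hmk
  · have h0 : ¬ (0 : ℤ) ≤ (m : ℤ) - k := by omega
    rw [chooseZ, if_neg h0]
    have hz : (∏ i ∈ range k, ((m : ℚ) - i)) = 0 :=
      Finset.prod_eq_zero (Finset.mem_range.mpr hmk) (by simp)
    simp [hz]
  · have h0 : (0 : ℤ) ≤ (m : ℤ) - k := by omega
    rw [chooseZ, if_pos h0]
    have htoNat : ((m : ℤ) - k).toNat = m - k := by omega
    rw [htoNat]
    rcases le_or_gt (m - k) (N - t) with hle | hlt
    · -- main case: everything casts from the ℕ identity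
      have key : (N - t).choose (m - k) * N.descFactorial t
          = N.choose m * (m.descFactorial k * (N - m).descFactorial (t - k)) := by
        have hF : 0 < (m - k)! * ((N - t) - (m - k))! :=
          Nat.mul_pos (Nat.factorial_pos _) (Nat.factorial_pos _)
        apply Nat.eq_of_mul_eq_mul_right hF
        have e1 := Nat.choose_mul_factorial_mul_factorial hle
        have e2 := Nat.factorial_mul_descFactorial htN
        have e3 := Nat.choose_mul_factorial_mul_factorial hmN
        have e4 := Nat.factorial_mul_descFactorial hmk
        have e5 := Nat.factorial_mul_descFactorial (show t - k ≤ N - m by omega)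
        have he : (N - t) - (m - k) = (N - m) - (t - k) := by omega
        calc (N - t).choose (m - k) * N.descFactorial t * ((m - k)! * ((N - t) - (m - k))!)
            = ((N - t).choose (m - k) * (m - k)! * ((N - t) - (m - k))!)
                * N.descFactorial t := by ring
          _ = (N - t)! * N.descFactorial t := by rw [e1]
          _ = N ! := e2
          _ = N.choose m * m ! * (N - m)! := e3.symm
          _ = N.choose m * ((m - k)! * m.descFactorial k)
                * (((N - m) - (t - k))! * (N - m).descFactorial (t - k)) := by rw [e4, e5]
          _ = N.choose m * (m.descFactorial k * (N - m).descFactorial (t - k))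
                * ((m - k)! * ((N - t) - (m - k))!) := by rw [he]; ring
      have c1 : (∏ i ∈ range t, ((N : ℚ) - i)) = (N.descFactorial t : ℚ) := by
        rw [Nat.descFactorial_eq_prod_range, Nat.cast_prod]
        refine Finset.prod_congr rfl fun i hi => ?_
        have : i ≤ N := le_trans (le_of_lt (Finset.mem_range.mp hi)) htN
        rw [Nat.cast_sub this]
      have c2 : (∏ i ∈ range k, ((m : ℚ) - i)) = (m.descFactorial k : ℚ) := by
        rw [Nat.descFactorial_eq_prod_range, Nat.cast_prod]
        refine Finset.prod_congr rfl fun i hi => ?_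
        have : i ≤ m := le_trans (le_of_lt (Finset.mem_range.mp hi)) hmk
        rw [Nat.cast_sub this]
      have c3 : (∏ j ∈ range (t - k), ((N : ℚ) - m - j))
          = ((N - m).descFactorial (t - k) : ℚ) := by
        rw [Nat.descFactorial_eq_prod_range, Nat.cast_prod]
        refine Finset.prod_congr rfl fun j hj => ?_
        have hj' : j < t - k := Finset.mem_range.mp hj
        have h1 : j ≤ N - m := by omega
        rw [Nat.cast_sub h1, Nat.cast_sub hmN]
      rw [c1, c2, c3]
      exact_mod_cast congrArg (fun x : ℕ => (x : ℚ)) key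
    · rw [Nat.choose_eq_zero_of_lt hlt]
      have hj : N - m < t - k := by omega
      have hz : (∏ j ∈ range (t - k), ((N : ℚ) - m - j)) = 0 := by
        refine Finset.prod_eq_zero (Finset.mem_range.mpr hj) ?_
        rw [Nat.cast_sub hmN]; ring
      simp [hz]

theorem pi_code_D2 (g n N t u : ℕ) (hg : 0 < g) (hn : 0 < n) (ht : 0 < t) (hu : 0 < u)
    (hN : N = g * n * u) (hgt : t + 1 ≤ g) (hnt : t + 1 ≤ n) (k : ℕ) (hk : k ≤ t) :
    ∑ l ∈ Finset.range (n + 1),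
      (-1 : ℚ) ^ l * ((n.choose l : ℚ) / (2 ^ (n - 1) * (N.choose (g * l) : ℚ))) *
        (chooseZ (N - t) ((g * l : ℤ) - (k : ℤ)) : ℚ) = 0 := by
  have hgN : g ≤ N := by
    have : g * 1 * 1 ≤ g * n * u := Nat.mul_le_mul (Nat.mul_le_mul (le_refl g) hn) hu
    simpa [hN] using this
  have htN : t ≤ N := by omega
  set D : ℚ := ∏ i ∈ range t, ((N : ℚ) - i) with hD_def
  have hD : D ≠ 0 := by
    rw [hD_def]
    refine Finset.prod_ne_zero_iff.mpr fun i hi => ?_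
    have hi' : i < t := Finset.mem_range.mp hi
    have : (i : ℚ) ≠ (N : ℚ) := by exact_mod_cast (by omega : i ≠ N)
    exact sub_ne_zero_of_ne (Ne.symm this)
  set Q : ℚ[X] := (∏ i ∈ range k, (C (g : ℚ) * X - C (i : ℚ))) *
      ∏ j ∈ range (t - k), (C (N : ℚ) - C (g : ℚ) * X - C (j : ℚ)) with hQ_def
  have hQdeg : Q.natDegree < n := by
    have h1 : (∏ i ∈ range k, (C (g : ℚ) * X - C (i : ℚ))).natDegree ≤ k := by
      refine le_trans (natDegree_prod_le _ _) ?_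
      refine le_trans (Finset.sum_le_card_nsmul _ _ 1 fun i _ => ?_) (by simp)
      refine le_trans (natDegree_sub_le _ _) ?_
      simp only [natDegree_C, max_le_iff]
      exact ⟨le_trans (natDegree_C_mul_le _ _) (by simp), by simp⟩
    have h2 : (∏ j ∈ range (t - k), (C (N : ℚ) - C (g : ℚ) * X - C (j : ℚ))).natDegree
        ≤ t - k := by
      refine le_trans (natDegree_prod_le _ _) ?_
      refine le_trans (Finset.sum_le_card_nsmul _ _ 1 fun j _ => ?_) (by simp)
      refine le_trans (natDegree_sub_le _ _) ?_
      simp only [natDegree_C, max_le_iff]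
      constructor
      · refine le_trans (natDegree_sub_le _ _) ?_
        simp only [natDegree_C, max_le_iff]
        exact ⟨by simp, le_trans (natDegree_C_mul_le _ _) (by simp)⟩
      · simp
    have : Q.natDegree ≤ k + (t - k) := le_trans (natDegree_mul_le) (Nat.add_le_add h1 h2)
    omega
  have key := alt_sum_poly n Q hQdeg
  have heval : ∀ l : ℕ, Q.eval (l : ℚ)
      = (∏ i ∈ range k, (((g * l : ℕ) : ℚ) - i)) *
        ∏ j ∈ range (t - k), ((N : ℚ) - ((g * l : ℕ) : ℚ) - j) := by
    intro l
    rw [hQ_def]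
    simp only [eval_mul, eval_prod, eval_sub, eval_mul, eval_C, eval_X]
    push_cast
    ring_nf
  have hterm : ∀ l ∈ range (n + 1),
      (-1 : ℚ) ^ l * ((n.choose l : ℚ) / (2 ^ (n - 1) * (N.choose (g * l) : ℚ))) *
        (chooseZ (N - t) ((g * l : ℤ) - (k : ℤ)) : ℚ)
      = (1 / (2 ^ (n - 1) * D)) * ((-1 : ℚ) ^ l * (n.choose l : ℚ) * Q.eval (l : ℚ)) := by
    intro l hl
    have hln : l ≤ n := Nat.lt_succ_iff.mp (Finset.mem_range.mp hl)
    have hm : g * l ≤ N := by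
      have : g * l * 1 ≤ g * n * u := Nat.mul_le_mul (Nat.mul_le_mul (le_refl g) hln) hu
      simpa [hN] using this
    have hcast : ((g * l : ℤ) - (k : ℤ)) = (((g * l : ℕ) : ℤ) - (k : ℤ)) := by push_cast; ring
    have te := term_eq N t k (g * l) htN hk hm
    have hCpos : (0 : ℚ) < (N.choose (g * l) : ℚ) := by
      exact_mod_cast Nat.choose_pos hm
    have hC : (N.choose (g * l) : ℚ) ≠ 0 := ne_of_gt hCpos
    have h2 : (2 : ℚ) ^ (n - 1) ≠ 0 := by positivity
    rw [heval l]
    rw [← hD_def] at te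
    push_cast at te ⊢
    field_simp
    linear_combination (n.choose l : ℚ) * te
  rw [Finset.sum_congr rfl hterm, ← Finset.mul_sum, key, mul_zero]
end

section
/- Let N ≥ 2 and let A, B ⊆ {0,...,N} be nonempty sets such that: (i) w ∈ A implies N−w ∈ A, (ii) w ∈ B implies N−w ∈ B, and (iii) any two distinct elements of A ∪ B differ by more than 1. Then for each k ∈ {0,1}, ∑_{w ∈ A} C(N−1, w−k) / ∑_{w' ∈ A} C(N, w') = 1/2, and similarly for B. -/
lemma chooseZ_nat (n w : ℕ) : chooseZ n ((w : ℤ) - 0) = n.choose w := by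
  simp [chooseZ]

lemma chooseZ_sub_one (n w : ℕ) :
    chooseZ n ((w : ℤ) - 1) = if w = 0 then 0 else n.choose (w - 1) := by
  cases w with
  | zero => simp [chooseZ]
  | succ m => simp [chooseZ]

lemma key (N : ℕ) (hN : 1 ≤ N) (A : Finset ℕ) (hsub : A ⊆ Finset.range (N + 1))
    (hne : A.Nonempty) (hsym : ∀ w ∈ A, N - w ∈ A) (k : ℕ) (hk : k ≤ 1) :
    (∑ w ∈ A, (chooseZ (N - 1) ((w : ℤ) - (k : ℤ)) : ℚ)) /
      (∑ w' ∈ A, (N.choose w' : ℚ)) = 1 / 2 := by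
  have hle : ∀ w ∈ A, w ≤ N := by
    intro w hw
    have := hsub hw
    simpa [Finset.mem_range, Nat.lt_succ_iff] using this
  set S : ℚ := ∑ w ∈ A, ((N - 1).choose w : ℚ) with hS
  -- T = S via the symmetry w ↦ N - w
  have hT : (∑ w ∈ A, (chooseZ (N - 1) ((w : ℤ) - 1) : ℚ)) = S := by
    rw [hS]
    refine Finset.sum_nbij' (fun w => N - w) (fun w => N - w) ?_ ?_ ?_ ?_ ?_
    · intro a ha; exact hsym a ha
    · intro a ha; exact hsym a ha
    · intro a ha; exact Nat.sub_sub_self (hle a ha)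
    · intro a ha; exact Nat.sub_sub_self (hle a ha)
    · intro a ha
      rw [chooseZ_sub_one]
      by_cases h0 : a = 0
      · subst h0
        have h2 : (N - 1).choose N = 0 := Nat.choose_eq_zero_of_lt (by omega)
        simp [h2]
      · have ha1 : a - 1 ≤ N - 1 := by
          have := hle a ha; omega
        have : (N - 1) - (a - 1) = N - a := by
          have := hle a ha; omega
        rw [if_neg h0, ← Nat.choose_symm ha1, this]
  have hPascal : (∑ w' ∈ A, (N.choose w' : ℚ))
      = S + ∑ w ∈ A, (chooseZ (N - 1) ((w : ℤ) - 1) : ℚ) := by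
    rw [hS, ← Finset.sum_add_distrib]
    refine Finset.sum_congr rfl ?_
    intro w hw
    rw [chooseZ_sub_one]
    cases w with
    | zero => simp
    | succ m =>
      have hN' : N = (N - 1) + 1 := by omega
      rw [if_neg (Nat.succ_ne_zero m)]
      push_cast
      rw [hN', Nat.choose_succ_succ]
      push_cast
      ring_nf
      simp [Nat.add_comm]
  have hSpos : 0 < S := by
    obtain ⟨w, hw⟩ := hne
    by_cases h : w ≤ N - 1
    · have hle' : ((N - 1).choose w : ℚ) ≤ S :=
        Finset.single_le_sum (f := fun i => ((N - 1).choose i : ℚ))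
          (fun i _ => by positivity) hw
      have : (0:ℚ) < ((N-1).choose w : ℚ) := by exact_mod_cast Nat.choose_pos h
      linarith
    · have hwN : w = N := by have := hle w hw; omega
      have h0 : (0 : ℕ) ∈ A := by
        have := hsym w hw; rwa [hwN, Nat.sub_self] at this
      have hle' : ((N - 1).choose 0 : ℚ) ≤ S :=
        Finset.single_le_sum (f := fun i => ((N - 1).choose i : ℚ))
          (fun i _ => by positivity) h0
      have h1 : ((N - 1).choose 0 : ℚ) = 1 := by simp
      linarith
  interval_cases k
  · have : (∑ w ∈ A, (chooseZ (N - 1) ((w : ℤ) - (0 : ℤ)) : ℚ)) = S := by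
      rw [hS]; exact Finset.sum_congr rfl fun w _ => by rw [chooseZ_nat]
    rw [show ((0:ℕ):ℤ) = 0 by norm_cast, this, hPascal, hT]
    field_simp; ring
  · rw [show ((1:ℕ):ℤ) = 1 by norm_cast, hT, hPascal, hT]
    field_simp; ring

theorem shibayama_D2 (N : ℕ) (hN : 2 ≤ N) (A B : Finset ℕ)
    (hAsub : A ⊆ Finset.range (N + 1)) (hBsub : B ⊆ Finset.range (N + 1))
    (hA : A.Nonempty) (hB : B.Nonempty)
    (hAsym : ∀ w ∈ A, N - w ∈ A) (hBsym : ∀ w ∈ B, N - w ∈ B)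
    (hD3 : ∀ w₁ ∈ A ∪ B, ∀ w₂ ∈ A ∪ B, w₁ ≠ w₂ → 1 < |(w₁ : ℤ) - (w₂ : ℤ)|) :
    ∀ k ∈ ({0, 1} : Finset ℕ),
      (∑ w ∈ A, (chooseZ (N - 1) ((w : ℤ) - (k : ℤ)) : ℚ)) /
          (∑ w' ∈ A, (N.choose w' : ℚ)) = 1 / 2 ∧
      (∑ w ∈ B, (chooseZ (N - 1) ((w : ℤ) - (k : ℤ)) : ℚ)) /
          (∑ w' ∈ B, (N.choose w' : ℚ)) = 1 / 2 := by
  intro k hk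
  have hk1 : k ≤ 1 := by
    simp only [Finset.mem_insert, Finset.mem_singleton] at hk
    omega
  exact ⟨key N (by omega) A hAsub hA hAsym k hk1,
         key N (by omega) B hBsub hB hBsym k hk1⟩
end

section
/- Let N ≥ 2, 1 ≤ t < N, and c : {0,...,N} → ℂ with |Ψ⟩ = ∑_{x ∈ {0,1}^N} c(wt(x))|x⟩ permutation-invariant. Tracing out the first t qubits of the rank-one operator |Ψ⟩⟨Ψ| yields the operator ∑_{k=0}^{t} C(t,k) |Ψ_k⟩⟨Ψ_k| on (ℂ²)^{⊗(N−t)}, where |Ψ_k⟩ = ∑_{x ∈ {0,1}^{N−t}} c(wt(x)+k)|x⟩. -/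
/-- Hamming weight of a bit string of length `n`. -/
def wt {n : ℕ} (x : Fin n → Bool) : ℕ := (Finset.univ.filter fun i => x i = true).card

lemma sum_wt {n : ℕ} {M : Type*} [AddCommMonoid M] (f : ℕ → M) :
    ∑ y : Fin n → Bool, f (wt y) =
      ∑ k ∈ Finset.range (n + 1), n.choose k • f k := by
  have h1 : ∑ y : Fin n → Bool, f (wt y) = ∑ s : Finset (Fin n), f s.card := by
    exact Fintype.sum_equiv
      ⟨fun z => Finset.univ.filter fun i => z i = true,
       fun s i => decide (i ∈ s),
       fun y => by funext i; simp,
       fun s => by ext i; simp⟩ _ _ fun y => by simp [wt, Equiv.coe_fn_mk]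
  rw [h1]
  have := Finset.sum_powerset_apply_card f (x := (Finset.univ : Finset (Fin n)))
  simpa [Finset.powerset_univ] using this

theorem partial_trace_PI_state (N t : ℕ) (hN : 2 ≤ N) (ht : 1 ≤ t) (htN : t < N) (c : ℕ → ℂ) :
    (fun (x x' : Fin (N - t) → Bool) =>
        ∑ y : Fin t → Bool, c (wt y + wt x) * star (c (wt y + wt x'))) =
      fun (x x' : Fin (N - t) → Bool) =>
        ∑ k ∈ Finset.range (t + 1), (t.choose k : ℂ) * (c (wt x + k) * star (c (wt x' + k))) := by
  funext x x'
  rw [sum_wt (fun k => c (k + wt x) * star (c (k + wt x')))]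
  refine Finset.sum_congr rfl fun k _ => ?_
  rw [nsmul_eq_mul, add_comm (wt x), add_comm (wt x')]
end

section
/- Let N, t with 1 ≤ t < N, let A, B ⊆ {0,...,N} be disjoint nonempty sets such that distinct elements of A ∪ B differ by more than t, and let f : A ∪ B → ℂ satisfy: for all 0 ≤ k ≤ t, ∑_{w∈A} |f(w)|² C(N−t, w−k) = ∑_{w∈B} |f(w)|² C(N−t, w−k) ≠ 0. For 0 ≤ k ≤ t define vectors in (ℂ²)^{⊗(N−t)}: U₁ᵏ = ∑_{w∈A} ∑_{x: wt(x)=w−k} f(w)|x⟩ and U₂ᵏ = ∑_{w∈B} ∑_{y: wt(y)=w−k} f(w)|y⟩. Then ⟨U₁ᵏ|U₁ᵏ⟩ = ⟨U₂ᵏ|U₂ᵏ⟩ ≠ 0, and for (k₁,b₁) ≠ (k₂,b₂) with 0 ≤ k₁,k₂ ≤ t and b₁,b₂ ∈ {1,2}, ⟨U_{b₁}^{k₁}|U_{b₂}^{k₂}⟩ = 0. -/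
lemma card_wt (n m : ℕ) :
    (Finset.univ.filter fun x : Fin n → Bool => wt x = m).card = n.choose m := by
  have h := Finset.card_powersetCard m (Finset.univ : Finset (Fin n))
  rw [Finset.card_univ, Fintype.card_fin] at h
  rw [← h]
  apply Finset.card_bij' (fun x _ => Finset.univ.filter fun i => x i = true)
    (fun s _ => fun i => decide (i ∈ s))
  case hi =>
    intro x hx
    simp only [Finset.mem_filter, Finset.mem_univ, true_and] at hx
    rw [Finset.mem_powersetCard]
    exact ⟨Finset.subset_univ _, hx⟩
  case hj =>
    intro s hs
    rw [Finset.mem_powersetCard] at hs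
    simp only [Finset.mem_filter, Finset.mem_univ, true_and]
    rw [← hs.2, wt]
    congr 1
    ext i
    simp
  case left_inv =>
    intro x hx
    funext i
    simp
  case right_inv =>
    intro s hs
    ext i
    simp

lemma chooseZ_cast (n k w : ℕ) :
    ((chooseZ n ((w : ℤ) - (k : ℤ)) : ℂ)) =
      if k ≤ w ∧ w - k ≤ n then (n.choose (w - k) : ℂ) else 0 := by
  unfold chooseZ
  by_cases h : k ≤ w
  · rw [if_pos (by omega : (0:ℤ) ≤ (w : ℤ) - (k : ℤ))]
    have ht : ((w : ℤ) - (k : ℤ)).toNat = w - k := by omega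
    rw [ht]
    by_cases h2 : w - k ≤ n
    · rw [if_pos ⟨h, h2⟩]
    · rw [if_neg (by tauto), Nat.choose_eq_zero_of_lt (by omega)]
      simp
  · rw [if_neg (by omega : ¬ (0:ℤ) ≤ (w : ℤ) - (k : ℤ)), if_neg (by tauto)]
    simp

theorem orthogonality_Uk (N t : ℕ) (ht : 1 ≤ t) (htN : t < N) (A B : Finset ℕ)
    (hAsub : A ⊆ Finset.range (N + 1)) (hBsub : B ⊆ Finset.range (N + 1))
    (hA : A.Nonempty) (hB : B.Nonempty) (hAB : Disjoint A B)
    (hD3 : ∀ w₁ ∈ A ∪ B, ∀ w₂ ∈ A ∪ B, w₁ ≠ w₂ → (t : ℤ) < |(w₁ : ℤ) - (w₂ : ℤ)|)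
    (f : ℕ → ℂ)
    (hD2 : ∀ k ≤ t,
      (∑ w ∈ A, ‖f w‖ ^ 2 * (chooseZ (N - t) ((w : ℤ) - (k : ℤ)) : ℝ)) =
        (∑ w ∈ B, ‖f w‖ ^ 2 * (chooseZ (N - t) ((w : ℤ) - (k : ℤ)) : ℝ)) ∧
      (∑ w ∈ A, ‖f w‖ ^ 2 * (chooseZ (N - t) ((w : ℤ) - (k : ℤ)) : ℝ)) ≠ 0) :
    let Uv : Fin 2 → ℕ → EuclideanSpace ℂ (Fin (N - t) → Bool) := fun b k => WithLp.toLp 2 fun x =>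
      if wt x + k ∈ (if b = 0 then A else B) then f (wt x + k) else 0
    (∀ k ≤ t,
        (@inner ℂ _ _ (Uv 0 k) (Uv 0 k) = @inner ℂ _ _ (Uv 1 k) (Uv 1 k)) ∧
        @inner ℂ _ _ (Uv 0 k) (Uv 0 k) ≠ 0) ∧
    (∀ k₁ ≤ t, ∀ k₂ ≤ t, ∀ b₁ b₂ : Fin 2, (k₁, b₁) ≠ (k₂, b₂) →
        @inner ℂ _ _ (Uv b₁ k₁) (Uv b₂ k₂) = 0) := by
  intro Uv
  have hUv : ∀ (b : Fin 2) (k : ℕ) (x : Fin (N - t) → Bool),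
      Uv b k x = if wt x + k ∈ (if b = 0 then A else B) then f (wt x + k) else 0 :=
    fun b k x => rfl
  have hinner : ∀ (u v : EuclideanSpace ℂ (Fin (N - t) → Bool)),
      @inner ℂ _ _ u v = ∑ x : Fin (N - t) → Bool, (starRingEnd ℂ) (u x) * v x := by
    intro u v
    rw [PiLp.inner_apply]
    exact Finset.sum_congr rfl fun i _ => by rw [RCLike.inner_apply]; ring
  -- norm computation
  have key : ∀ (S : Finset ℕ) (k : ℕ),
      (∑ x : Fin (N - t) → Bool, (starRingEnd ℂ)
          ((if wt x + k ∈ S then f (wt x + k) else 0 : ℂ)) *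
          (if wt x + k ∈ S then f (wt x + k) else 0)) =
        ((∑ w ∈ S, ‖f w‖ ^ 2 * (chooseZ (N - t) ((w : ℤ) - (k : ℤ)) : ℝ) : ℝ) : ℂ) := by
    intro S k
    have step1 : ∀ x : Fin (N - t) → Bool,
        (starRingEnd ℂ) ((if wt x + k ∈ S then f (wt x + k) else 0 : ℂ)) *
          (if wt x + k ∈ S then f (wt x + k) else 0) =
        (if wt x + k ∈ S then ((‖f (wt x + k)‖ : ℂ)) ^ 2 else 0) := by
      intro x
      by_cases h : wt x + k ∈ S
      · rw [if_pos h, if_pos h, RCLike.conj_mul]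
        norm_cast
      · simp [h]
    simp only [step1]
    -- fiberwise by weight
    have hmaps : ∀ x : Fin (N - t) → Bool, x ∈ (Finset.univ : Finset (Fin (N - t) → Bool)) →
        wt x ∈ Finset.range (N - t + 1) := by
      intro x _
      rw [Finset.mem_range, Nat.lt_succ_iff]
      calc wt x ≤ (Finset.univ : Finset (Fin (N - t))).card := Finset.card_filter_le _ _
        _ = N - t := by simp
    rw [← Finset.sum_fiberwise_of_maps_to hmaps
      (fun x => if wt x + k ∈ S then ((‖f (wt x + k)‖ : ℂ)) ^ 2 else 0)]
    have step2 : ∀ m ∈ Finset.range (N - t + 1),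
        (∑ x ∈ Finset.univ.filter (fun x : Fin (N - t) → Bool => wt x = m),
          (if wt x + k ∈ S then ((‖f (wt x + k)‖ : ℂ)) ^ 2 else 0)) =
        (if m + k ∈ S then ((N - t).choose m : ℂ) * ((‖f (m + k)‖ : ℂ)) ^ 2 else 0) := by
      intro m _
      have hc : ∀ x ∈ Finset.univ.filter (fun x : Fin (N - t) → Bool => wt x = m),
          (if wt x + k ∈ S then ((‖f (wt x + k)‖ : ℂ)) ^ 2 else 0) =
            (if m + k ∈ S then ((‖f (m + k)‖ : ℂ)) ^ 2 else 0) := by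
        intro x hx
        rw [Finset.mem_filter] at hx
        rw [hx.2]
      rw [Finset.sum_congr rfl hc, Finset.sum_const, card_wt, nsmul_eq_mul, mul_ite, mul_zero]
    rw [Finset.sum_congr rfl step2]
    -- RHS: push cast and reindex
    push_cast
    simp only [chooseZ_cast]
    simp only [mul_ite, mul_zero]
    rw [← Finset.sum_filter, ← Finset.sum_filter]
    apply Eq.symm
    refine Finset.sum_nbij' (fun w => w - k) (fun m => m + k) ?_ ?_ ?_ ?_ ?_
    · intro w hw
      simp only [Finset.mem_filter, Finset.mem_range] at hw ⊢
      have h1 : w - k < N - t + 1 := by omega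
      have h2 : w - k + k = w := by omega
      exact ⟨h1, by rw [h2]; exact hw.1⟩
    · intro m hm
      simp only [Finset.mem_filter, Finset.mem_range] at hm ⊢
      exact ⟨hm.2, by omega, by omega⟩
    · intro w hw
      simp only [Finset.mem_filter] at hw
      show w - k + k = w
      omega
    · intro m hm
      show m + k - k = m
      omega
    · intro w hw
      simp only [Finset.mem_filter] at hw
      show _ = ((N - t).choose (w - k) : ℂ) * ((‖f (w - k + k)‖ : ℂ)) ^ 2
      have h2 : w - k + k = w := by omega
      rw [h2, mul_comm]
  -- orthogonality term lemma
  have hzero : ∀ (k₁ k₂ : ℕ) (b₁ b₂ : Fin 2), k₁ ≤ t → k₂ ≤ t → (k₁, b₁) ≠ (k₂, b₂) →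
      ∀ x : Fin (N - t) → Bool, (starRingEnd ℂ) (Uv b₁ k₁ x) * Uv b₂ k₂ x = 0 := by
    intro k₁ k₂ b₁ b₂ hk₁ hk₂ hne x
    rw [hUv, hUv]
    by_cases h1 : wt x + k₁ ∈ (if b₁ = 0 then A else B)
    · by_cases h2 : wt x + k₂ ∈ (if b₂ = 0 then A else B)
      · exfalso
        have hw1 : wt x + k₁ ∈ A ∪ B := by
          split_ifs at h1 with hb
          · exact Finset.mem_union_left _ h1
          · exact Finset.mem_union_right _ h1
        have hw2 : wt x + k₂ ∈ A ∪ B := by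
          split_ifs at h2 with hb
          · exact Finset.mem_union_left _ h2
          · exact Finset.mem_union_right _ h2
        have hne' : wt x + k₁ ≠ wt x + k₂ := by
          intro heq
          have hk : k₁ = k₂ := by omega
          subst hk
          have hb : b₁ ≠ b₂ := by
            intro hbe
            exact hne (by rw [hbe])
          fin_cases b₁ <;> fin_cases b₂ <;> simp_all
          · exact Finset.disjoint_left.mp hAB h1 h2
          · exact Finset.disjoint_left.mp hAB h2 h1
        have habs := hD3 _ hw1 _ hw2 hne'
        rcases abs_cases ((↑(wt x + k₁) : ℤ) - (↑(wt x + k₂) : ℤ)) with ⟨he, _⟩ | ⟨he, _⟩ <;>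
          rw [he] at habs <;> push_cast at habs <;> omega
      · rw [if_neg h2, mul_zero]
    · rw [if_neg h1, map_zero, zero_mul]
  constructor
  · intro k hk
    have e0 : @inner ℂ _ _ (Uv 0 k) (Uv 0 k) =
        ((∑ w ∈ A, ‖f w‖ ^ 2 * (chooseZ (N - t) ((w : ℤ) - (k : ℤ)) : ℝ) : ℝ) : ℂ) := by
      rw [hinner]
      have hA' : ∀ x : Fin (N - t) → Bool, Uv 0 k x =
          if wt x + k ∈ A then f (wt x + k) else 0 := by
        intro x; rw [hUv]; simp
      simp only [hA']
      exact key A k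
    have e1 : @inner ℂ _ _ (Uv 1 k) (Uv 1 k) =
        ((∑ w ∈ B, ‖f w‖ ^ 2 * (chooseZ (N - t) ((w : ℤ) - (k : ℤ)) : ℝ) : ℝ) : ℂ) := by
      rw [hinner]
      have hB' : ∀ x : Fin (N - t) → Bool, Uv 1 k x =
          if wt x + k ∈ B then f (wt x + k) else 0 := by
        intro x; rw [hUv]
        norm_num
      simp only [hB']
      exact key B k
    obtain ⟨heq, hne0⟩ := hD2 k hk
    refine ⟨?_, ?_⟩
    · rw [e0, e1, heq]
    · rw [e0]
      exact_mod_cast hne0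
  · intro k₁ hk₁ k₂ hk₂ b₁ b₂ hne
    rw [hinner]
    exact Finset.sum_eq_zero fun x _ => hzero k₁ k₂ b₁ b₂ hk₁ hk₂ hne x
end
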